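/- Let X, X₁, u_i, v_i be as in the context and assume additionally that tr X = 0. Writing F̃_j(X) for the coefficient of z^j in det(I + z·X), one has F̃_{m+1}(X) = (−1)^m·Σ_{i=1}^n u_i v_i + Σ_{j=2}^{m} (−1)^{m−j}·F̃_j(X)·trS^{m+1−j}(X₁) + (−1)^m·trS^{m+1}(X₁). (Lemma 'block 2', equation (2) of the paper.) -/

import Mathlib

open Polynomial

/-- `trΛ^k(M)`: the coefficient of `z^k` in `det(I + z·M)`. -/
noncomputable def trLambda {N : ℕ} (M : Matrix (Fin N) (Fin N) ℂ) (k : ℕ) : ℂ :=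
  ((1 + (Polynomial.X : ℂ[X]) • M.map Polynomial.C).det).coeff k

/-- `trS^k(M)`: the coefficient of `t^k` in the multiplicative inverse of `det(I − t·M)`
in `ℂ[[t]]`. -/
noncomputable def trS {N : ℕ} (M : Matrix (Fin N) (Fin N) ℂ) (k : ℕ) : ℂ :=
  PowerSeries.coeff k
    ((((1 - (Polynomial.X : ℂ[X]) • M.map Polynomial.C).det : ℂ[X]) : PowerSeries ℂ)⁻¹)

open Matrix

lemma map_det_one_add_X_smul {S : Type*} [CommRing S] (f : ℂ[X] →+* S) {N : ℕ}
    (M : Matrix (Fin N) (Fin N) ℂ) :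
    f ((1 + (X : ℂ[X]) • M.map C).det) =
      (1 + f X • M.map (fun c => f (C c)) :
        Matrix (Fin N) (Fin N) S).det := by
  rw [RingHom.map_det]
  congr 1
  ext i j
  simp only [RingHom.mapMatrix_apply, Matrix.map_apply, Matrix.add_apply, Matrix.smul_apply,
    Matrix.one_apply, smul_eq_mul]
  rw [map_add, f.map_mul]
  by_cases h : i = j <;> simp [h, mul_comm (f X)]

lemma natDegree_det_one_add_X_smul {N : ℕ} (M : Matrix (Fin N) (Fin N) ℂ) :
    ((1 + (X : ℂ[X]) • M.map C).det).natDegree ≤ N := by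
  have hentry : ∀ i j : Fin N, ((1 + (X : ℂ[X]) • M.map C) i j).natDegree ≤ 1 := by
    intro i j
    simp only [Matrix.add_apply, Matrix.smul_apply, Matrix.one_apply, Matrix.map_apply,
      smul_eq_mul]
    refine le_trans (Polynomial.natDegree_add_le _ _) ?_
    simp only [max_le_iff]
    refine ⟨by split <;> simp, ?_⟩
    rw [Polynomial.X_mul_C]
    exact le_trans Polynomial.natDegree_mul_le (by simp)
  rw [Matrix.det_apply]
  refine Polynomial.natDegree_sum_le_of_forall_le _ _ (fun σ _ => ?_)
  have : (Equiv.Perm.sign σ : ℤ) • (∏ i, (1 + (X : ℂ[X]) • M.map C) (σ i) i) =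
      ((Equiv.Perm.sign σ : ℤ) : ℂ[X]) * ∏ i, (1 + (X : ℂ[X]) • M.map C) (σ i) i :=
    zsmul_eq_mul _ _
  rw [Units.smul_def, this]
  refine le_trans Polynomial.natDegree_mul_le ?_
  rw [Polynomial.natDegree_intCast, zero_add]
  refine le_trans (Polynomial.natDegree_prod_le _ _) ?_
  refine le_trans (Finset.sum_le_sum (fun i _ => hentry (σ i) i)) (by simp)


lemma adj_corner {R : Type*} [CommRing R] {k : ℕ}
    (D : Matrix (Fin (k+2)) (Fin (k+2)) R) (z : R)
    (hD0 : ∀ a b : Fin (k+2), (a : ℕ) + 2 ≤ (b : ℕ) → D a b = 0)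
    (hD1 : ∀ a b : Fin (k+2), (b : ℕ) = (a : ℕ) + 1 → D a b = z) :
    adjugate D 0 (Fin.last (k+1)) = (-1)^(k+1) * z^(k+1) := by
  rw [Matrix.adjugate_apply]
  rw [Matrix.det_succ_row _ (Fin.last (k+1))]
  rw [Finset.sum_eq_single (0 : Fin (k+2))]
  · rw [Matrix.updateRow_self]
    have h1 : (Pi.single (0 : Fin (k+2)) (1:R) : Fin (k+2) → R) 0 = 1 := by simp
    rw [h1, mul_one]
    have hsub : ((D.updateRow (Fin.last (k+1)) (Pi.single 0 1)).submatrix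
        (Fin.last (k+1)).succAbove (0 : Fin (k+2)).succAbove).det = z^(k+1) := by
      rw [Matrix.det_of_lowerTriangular]
      · rw [Finset.prod_congr rfl (g := fun _ => z) (fun a _ => ?_)]
        · simp
        · rw [Matrix.submatrix_apply, Fin.succAbove_last, Fin.succAbove_zero,
            Matrix.updateRow_ne (Fin.ne_of_lt (Fin.castSucc_lt_last a))]
          exact hD1 _ _ (by simp)
      · intro i j hij
        have hij' : i < j := hij
        rw [Matrix.submatrix_apply, Fin.succAbove_last, Fin.succAbove_zero]
        rw [Matrix.updateRow_ne (Fin.ne_of_lt (Fin.castSucc_lt_last i))]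
        refine hD0 _ _ ?_
        have : (i : ℕ) < (j : ℕ) := hij'
        simp only [Fin.coe_castSucc, Fin.val_succ]
        omega
    rw [hsub]
    simp [Fin.val_last]
  · intro b _ hb
    rw [Matrix.updateRow_self, Pi.single_eq_of_ne hb, mul_zero, zero_mul]
  · intro h; exact absurd (Finset.mem_univ _) h

lemma key {R : Type*} [CommRing R] {n k : ℕ}
    (A : Matrix (Fin n) (Fin n) R) (D : Matrix (Fin (k+2)) (Fin (k+2)) R)
    (z : R) (u v : Fin n → R) (hA : IsUnit A.det) (hD : IsUnit D.det)
    (hD0 : ∀ a b : Fin (k+2), (a : ℕ) + 2 ≤ (b : ℕ) → D a b = 0)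
    (hD1 : ∀ a b : Fin (k+2), (b : ℕ) = (a : ℕ) + 1 → D a b = z) :
    (fromBlocks A
        (Matrix.of fun i (a : Fin (k+2)) => if a = 0 then z * u i else 0)
        (Matrix.of fun (a : Fin (k+2)) j => if a = Fin.last (k+1) then z * v j else 0) D).det
      = A.det * D.det + (-1)^k * z^(k+3) * (v ⬝ᵥ (A.adjugate *ᵥ u)) := by
  haveI : Invertible D := D.invertibleOfIsUnitDet hD
  rw [Matrix.det_fromBlocks₂₂]
  set c : R := z * z * (⅟D 0 (Fin.last (k+1))) with hc
  have hBDC : (of fun i (a : Fin (k+2)) => if a = 0 then z * u i else 0) * ⅟D *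
      (of fun (a : Fin (k+2)) j => if a = Fin.last (k+1) then z * v j else 0)
      = replicateCol Unit (c • u) * replicateRow Unit v := by
    ext i j
    simp only [Matrix.mul_apply, Matrix.of_apply, Matrix.replicateCol_apply, Matrix.replicateRow_apply,
      ite_mul, zero_mul, mul_ite, mul_zero, Finset.sum_ite_eq', Finset.mem_univ, if_true,
      Pi.smul_apply, smul_eq_mul, hc, Finset.univ_unique, Finset.sum_singleton]
    ring
  rw [hBDC]
  have hsplit : A - replicateCol Unit (c • u) * replicateRow Unit v
      = A + replicateCol Unit ((-c) • u) * replicateRow Unit v := by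
    ext i j
    simp only [Matrix.sub_apply, Matrix.add_apply, Matrix.mul_apply, Matrix.replicateCol_apply,
      Matrix.replicateRow_apply, Pi.smul_apply, smul_eq_mul, Finset.univ_unique, Finset.sum_singleton]
    ring
  rw [hsplit, Matrix.det_add_replicateCol_mul_replicateRow hA]
  have hdet1 : (1 + replicateRow Unit v * A⁻¹ * replicateCol Unit ((-c) • u)).det
      = 1 + (-c) * (v ⬝ᵥ A⁻¹ *ᵥ u) := by
    rw [← Matrix.replicateRow_vecMul, Matrix.det_unique, Matrix.add_apply, Matrix.one_apply_eq,
      Matrix.replicateRow_mul_replicateCol_apply, dotProduct_smul, smul_eq_mul, ← Matrix.dotProduct_mulVec]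
  rw [hdet1]
  have hAegy : A⁻¹ = Ring.inverse A.det • A.adjugate := Matrix.inv_def A
  have hDinvof : ⅟D = Ring.inverse D.det • D.adjugate := by
    rw [Matrix.invOf_eq_nonsing_inv, Matrix.inv_def]
  have hVAU : v ⬝ᵥ A⁻¹ *ᵥ u = Ring.inverse A.det * (v ⬝ᵥ A.adjugate *ᵥ u) := by
    rw [hAegy, Matrix.smul_mulVec, dotProduct_smul, smul_eq_mul]
  have hcval : c = z * z * (Ring.inverse D.det * ((-1)^(k+1) * z^(k+1))) := by
    rw [hc, hDinvof, Matrix.smul_apply, smul_eq_mul, adj_corner D z hD0 hD1]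
  have hAinv : A.det * Ring.inverse A.det = 1 := Ring.mul_inverse_cancel _ hA
  have hDinv : D.det * Ring.inverse D.det = 1 := Ring.mul_inverse_cancel _ hD
  rw [hVAU, hcval]
  set Qa := v ⬝ᵥ A.adjugate *ᵥ u
  set rA := Ring.inverse A.det
  set rD := Ring.inverse D.det
  linear_combination ((-1)^k * z^(k+3) * Qa * (A.det * rA)) * hDinv +
    ((-1)^k * z^(k+3) * Qa) * hAinv

/-- The power-series version of the determinant. -/
noncomputable def PSdet {N : ℕ} (M : Matrix (Fin N) (Fin N) ℂ) : PowerSeries ℂ :=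
  (1 + (PowerSeries.X : PowerSeries ℂ) • M.map (PowerSeries.C)).det

lemma coe_det {N : ℕ} (M : Matrix (Fin N) (Fin N) ℂ) :
    (((1 + (X : ℂ[X]) • M.map C).det : ℂ[X]) : PowerSeries ℂ) = PSdet M := by
  have := map_det_one_add_X_smul (Polynomial.coeToPowerSeries.ringHom (R := ℂ)) M
  simp only [Polynomial.coeToPowerSeries.ringHom_apply, Polynomial.coe_X, Polynomial.coe_C]
    at this
  rw [this, PSdet]

lemma trLambda_eq {N : ℕ} (M : Matrix (Fin N) (Fin N) ℂ) (k : ℕ) :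
    trLambda M k = PowerSeries.coeff k (PSdet M) := by
  rw [trLambda, ← coe_det, Polynomial.coeff_coe]

lemma trS_eq {N : ℕ} (M : Matrix (Fin N) (Fin N) ℂ) (k : ℕ) :
    trS M k = PowerSeries.coeff k (PSdet (-M))⁻¹ := by
  rw [trS]
  have hm : (1 - (X : ℂ[X]) • M.map C) = 1 + (X : ℂ[X]) • (-M).map C := by
    refine Matrix.ext fun i j => ?_
    simp only [Matrix.sub_apply, Matrix.add_apply, Matrix.smul_apply,
      Matrix.map_apply, Matrix.neg_apply, smul_eq_mul, map_neg]
    ring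
  rw [hm, coe_det]

lemma constantCoeff_PSdet {N : ℕ} (M : Matrix (Fin N) (Fin N) ℂ) :
    PowerSeries.constantCoeff (PSdet M) = 1 := by
  rw [PSdet, RingHom.map_det]
  have : (PowerSeries.constantCoeff).mapMatrix
      (1 + (PowerSeries.X : PowerSeries ℂ) • M.map (PowerSeries.C)) = 1 := by
    ext i j
    simp [Matrix.one_apply, apply_ite]
  rw [this, Matrix.det_one]

lemma rescale_PSdet {N : ℕ} (M : Matrix (Fin N) (Fin N) ℂ) :
    PowerSeries.rescale (-1 : ℂ) (PSdet M) = PSdet (-M) := by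
  have := map_det_one_add_X_smul
    ((PowerSeries.rescale (-1 : ℂ)).comp (Polynomial.coeToPowerSeries.ringHom (R := ℂ))) M
  simp only [RingHom.coe_comp, Function.comp_apply, Polynomial.coeToPowerSeries.ringHom_apply,
    Polynomial.coe_X, Polynomial.coe_C] at this
  rw [coe_det] at this
  rw [this, PSdet]
  congr 1
  refine Matrix.ext fun i j => ?_
  have h1 : PowerSeries.rescale (-1 : ℂ) PowerSeries.X = -PowerSeries.X := by
    rw [PowerSeries.rescale_X]
    simp
  have h2 : ∀ c : ℂ, PowerSeries.rescale (-1 : ℂ) (PowerSeries.C c) = PowerSeries.C c := by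
    intro c
    ext d
    rw [PowerSeries.coeff_rescale]
    simp only [PowerSeries.coeff_C]
    split
    · next h => subst h; simp
    · simp
  simp only [Matrix.add_apply, Matrix.smul_apply, Matrix.map_apply, Matrix.neg_apply,
    smul_eq_mul, h1, h2]
  rw [map_neg]
  ring

lemma coeff_inv_PSdet_neg {N : ℕ} (M : Matrix (Fin N) (Fin N) ℂ) (j : ℕ) :
    PowerSeries.coeff j (PSdet (-M))⁻¹ = (-1)^j * PowerSeries.coeff j (PSdet M)⁻¹ := by
  have hc : PowerSeries.constantCoeff (PSdet M) ≠ 0 := by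
    rw [constantCoeff_PSdet]; exact one_ne_zero
  have hc' : PowerSeries.constantCoeff (PSdet (-M)) ≠ 0 := by
    rw [constantCoeff_PSdet]; exact one_ne_zero
  have : PowerSeries.rescale (-1 : ℂ) (PSdet M)⁻¹ = (PSdet (-M))⁻¹ := by
    rw [PowerSeries.eq_inv_iff_mul_eq_one hc']
    rw [← rescale_PSdet, ← _root_.map_mul]
    rw [PowerSeries.inv_mul_cancel _ hc]
    exact map_one _
  rw [← this, PowerSeries.coeff_rescale]

lemma trS_zero {N : ℕ} (M : Matrix (Fin N) (Fin N) ℂ) : trS M 0 = 1 := by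
  rw [trS_eq, PowerSeries.coeff_zero_eq_constantCoeff, PowerSeries.constantCoeff_inv,
    constantCoeff_PSdet, inv_one]

lemma trLambda_zero {N : ℕ} (M : Matrix (Fin N) (Fin N) ℂ) : trLambda M 0 = 1 := by
  rw [trLambda_eq, PowerSeries.coeff_zero_eq_constantCoeff, constantCoeff_PSdet]

lemma trLambda_one {N : ℕ} (M : Matrix (Fin N) (Fin N) ℂ) : trLambda M 1 = M.trace := by
  rw [trLambda, Matrix.coeff_det_one_add_X_smul_one]

set_option maxHeartbeats 1000000 in
theorem block2 (n m : ℕ) (hn : 1 ≤ n) (hm : 2 ≤ m)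
    (Xm : Matrix (Fin (n + m)) (Fin (n + m)) ℂ)
    (h1 : ∀ i j : Fin (n + m), i.val < n → n + 1 ≤ j.val → Xm i j = 0)
    (h2 : ∀ i j : Fin (n + m), n ≤ i.val → i.val < n + m - 1 → j.val < n → Xm i j = 0)
    (h3 : ∀ i j : Fin (n + m), n ≤ i.val → n ≤ j.val → i.val + 2 ≤ j.val → Xm i j = 0)
    (h4 : ∀ i j : Fin (n + m), n ≤ i.val → j.val = i.val + 1 → Xm i j = 1)
    (htr : Xm.trace = 0)
    (X₁ : Matrix (Fin n) (Fin n) ℂ)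
    (hX₁ : ∀ i j : Fin n, X₁ i j = Xm (Fin.castLE (by omega) i) (Fin.castLE (by omega) j))
    (u v : Fin n → ℂ)
    (hu : ∀ i : Fin n, u i = Xm (Fin.castLE (by omega) i) ⟨n, by omega⟩)
    (hv : ∀ i : Fin n, v i = Xm ⟨n + m - 1, by omega⟩ (Fin.castLE (by omega) i)) :
    trLambda Xm (m + 1) =
      (-1 : ℂ) ^ m * ∑ i : Fin n, u i * v i +
        ∑ j ∈ Finset.Icc 2 m, (-1 : ℂ) ^ (m - j) * trLambda Xm j * trS X₁ (m + 1 - j) +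
        (-1 : ℂ) ^ m * trS X₁ (m + 1) := by
  obtain ⟨k, rfl⟩ : ∃ k, m = k + 2 := ⟨m - 2, by omega⟩
  classical
  set t : PowerSeries ℂ := PowerSeries.X with ht
  set MA : Matrix (Fin n) (Fin n) (PowerSeries ℂ) := 1 + t • X₁.map (PowerSeries.C) with hMA
  set X₂ : Matrix (Fin (k+2)) (Fin (k+2)) ℂ :=
    Matrix.of (fun a b => Xm (finSumFinEquiv (Sum.inr a)) (finSumFinEquiv (Sum.inr b))) with hX₂
  set MD : Matrix (Fin (k+2)) (Fin (k+2)) (PowerSeries ℂ) :=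
    1 + t • X₂.map (PowerSeries.C) with hMD
  set MM : Matrix (Fin (n+(k+2))) (Fin (n+(k+2))) (PowerSeries ℂ) :=
    1 + t • Xm.map (PowerSeries.C) with hMM
  -- block identification
  have hsub : MM.submatrix finSumFinEquiv finSumFinEquiv =
      fromBlocks MA
        (Matrix.of fun i (a : Fin (k+2)) =>
          if a = 0 then t * (fun c => PowerSeries.C (u c)) i else 0)
        (Matrix.of fun (a : Fin (k+2)) j =>
          if a = Fin.last (k+1) then t * (fun c => PowerSeries.C (v c)) j else 0)
        MD := by
    refine Matrix.ext fun x y => ?_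
    cases x with
    | inl i =>
      cases y with
      | inl j =>
        simp only [Matrix.submatrix_apply, finSumFinEquiv_apply_left,
          Matrix.fromBlocks_apply₁₁, hMM, hMA, Matrix.add_apply, Matrix.smul_apply,
          Matrix.map_apply, smul_eq_mul]
        congr 1
        · simp [Matrix.one_apply, Fin.ext_iff]
        · rw [hX₁ i j]
          congr 2 <;> exact Fin.ext (by simp)
      | inr a =>
        simp only [Matrix.submatrix_apply, finSumFinEquiv_apply_left,
          finSumFinEquiv_apply_right, Matrix.fromBlocks_apply₁₂, Matrix.of_apply, hMM,
          Matrix.add_apply, Matrix.smul_apply, Matrix.map_apply, smul_eq_mul]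
        rw [Matrix.one_apply_ne (by simp [Fin.ext_iff]; omega)]
        by_cases ha : a = 0
        · subst ha
          rw [if_pos rfl, hu i, zero_add]
          congr 2 <;> exact Fin.ext (by simp)
        · rw [if_neg ha]
          have : (a : ℕ) ≠ 0 := fun h => ha (Fin.ext h)
          rw [h1 _ _ (by simp) (by simp; omega)]
          simp
    | inr a =>
      cases y with
      | inl j =>
        simp only [Matrix.submatrix_apply, finSumFinEquiv_apply_left,
          finSumFinEquiv_apply_right, Matrix.fromBlocks_apply₂₁, Matrix.of_apply, hMM,
          Matrix.add_apply, Matrix.smul_apply, Matrix.map_apply, smul_eq_mul]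
        rw [Matrix.one_apply_ne (by simp [Fin.ext_iff]; omega)]
        by_cases ha : a = Fin.last (k+1)
        · subst ha
          rw [if_pos rfl, hv j, zero_add]
          congr 2 <;> exact Fin.ext (by simp [Fin.val_last]; omega)
        · rw [if_neg ha]
          have : (a : ℕ) < k + 1 := by
            have := Fin.val_lt_last ha
            simpa [Fin.val_last] using this
          rw [h2 _ _ (by simp) (by simp; omega) (by simp)]
          simp
      | inr b =>
        simp only [Matrix.submatrix_apply, finSumFinEquiv_apply_right,
          Matrix.fromBlocks_apply₂₂, hMM, hMD, hX₂, Matrix.add_apply, Matrix.smul_apply,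
          Matrix.map_apply, Matrix.of_apply, smul_eq_mul, finSumFinEquiv_apply_right]
        congr 1
        simp [Matrix.one_apply, Fin.ext_iff]
  have hMAdet : MA.det = PSdet X₁ := rfl
  have hMDdet : MD.det = PSdet X₂ := rfl
  have hMMdet : MM.det = PSdet Xm := rfl
  have hA : IsUnit MA.det := by
    rw [hMAdet, PowerSeries.isUnit_iff_constantCoeff, constantCoeff_PSdet]
    exact isUnit_one
  have hD : IsUnit MD.det := by
    rw [hMDdet, PowerSeries.isUnit_iff_constantCoeff, constantCoeff_PSdet]
    exact isUnit_one
  have hD0 : ∀ a b : Fin (k+2), (a : ℕ) + 2 ≤ (b : ℕ) → MD a b = 0 := by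
    intro a b hab
    simp only [hMD, Matrix.add_apply, Matrix.smul_apply, Matrix.map_apply, smul_eq_mul,
      hX₂, Matrix.of_apply]
    rw [Matrix.one_apply_ne (Fin.ne_of_val_ne (by omega))]
    rw [h3 _ _ (by simp) (by simp) (by simp; omega)]
    simp
  have hD1 : ∀ a b : Fin (k+2), (b : ℕ) = (a : ℕ) + 1 → MD a b = t := by
    intro a b hab
    simp only [hMD, Matrix.add_apply, Matrix.smul_apply, Matrix.map_apply, smul_eq_mul,
      hX₂, Matrix.of_apply]
    rw [Matrix.one_apply_ne (Fin.ne_of_val_ne (by omega))]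
    rw [h4 _ _ (by simp) (by simp; omega)]
    simp
  have hstar : PSdet Xm = PSdet X₁ * PSdet X₂ +
      (-1 : PowerSeries ℂ)^k * t^(k+3) *
        ((fun c => PowerSeries.C (v c)) ⬝ᵥ
          (MA.adjugate *ᵥ (fun c => PowerSeries.C (u c)))) := by
    have hk := key MA MD t (fun c => PowerSeries.C (u c)) (fun c => PowerSeries.C (v c))
      hA hD hD0 hD1
    rw [← hsub, det_submatrix_equiv_self] at hk
    rw [← hMMdet, hk, hMAdet, hMDdet]
  set Q : PowerSeries ℂ := (fun c => PowerSeries.C (v c)) ⬝ᵥ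
      (MA.adjugate *ᵥ (fun c => PowerSeries.C (u c))) with hQdef
  have hadj : ∀ i j : Fin n, PowerSeries.constantCoeff (MA.adjugate i j)
      = (1 : Matrix (Fin n) (Fin n) ℂ) i j := by
    intro i j
    have h0 : (PowerSeries.constantCoeff).mapMatrix MA = 1 := by
      refine Matrix.ext fun i' j' => ?_
      simp [hMA, ht, Matrix.one_apply, apply_ite (PowerSeries.constantCoeff)]
    have hh := (PowerSeries.constantCoeff).map_adjugate MA
    rw [h0, Matrix.adjugate_one] at hh
    calc PowerSeries.constantCoeff (MA.adjugate i j)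
        = ((PowerSeries.constantCoeff).mapMatrix MA.adjugate) i j := rfl
      _ = (1 : Matrix (Fin n) (Fin n) ℂ) i j := by rw [hh]
  have hQ0 : PowerSeries.constantCoeff Q = ∑ i, v i * u i := by
    rw [hQdef, dotProduct, map_sum]
    refine Finset.sum_congr rfl fun i _ => ?_
    rw [_root_.map_mul, PowerSeries.constantCoeff_C]
    congr 1
    rw [Matrix.mulVec, dotProduct, map_sum]
    rw [Finset.sum_congr rfl
      (fun j _ => by rw [_root_.map_mul, PowerSeries.constantCoeff_C, hadj i j])]
    simp [Matrix.one_apply]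
  set W : PowerSeries ℂ := (PSdet X₁)⁻¹ with hW
  have hc1 : PowerSeries.constantCoeff (PSdet X₁) ≠ 0 := by
    rw [constantCoeff_PSdet]; exact one_ne_zero
  have hW1 : PSdet X₁ * W = 1 := PowerSeries.mul_inv_cancel _ hc1
  have hWc : PowerSeries.constantCoeff W = 1 := by
    rw [hW, PowerSeries.constantCoeff_inv, constantCoeff_PSdet, inv_one]
  have heq : PSdet Xm * W = PSdet X₂ +
      PowerSeries.C ((-1 : ℂ)^k) * (PowerSeries.X ^ (k+3) * (Q * W)) := by
    have hCk : (PowerSeries.C) ((-1 : ℂ)^k) = (-1 : PowerSeries ℂ)^k := by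
      rw [_root_.map_pow, _root_.map_neg, _root_.map_one]
    rw [hCk, hstar]
    linear_combination (PSdet X₂) * hW1
  have hcoeff := congrArg (PowerSeries.coeff (k+3)) heq
  rw [PowerSeries.coeff_mul, Finset.Nat.sum_antidiagonal_eq_sum_range_succ_mk,
    map_add, PowerSeries.coeff_C_mul] at hcoeff
  have hX2c : PowerSeries.coeff (k+3) (PSdet X₂) = 0 := by
    rw [← trLambda_eq, trLambda]
    exact Polynomial.coeff_eq_zero_of_natDegree_lt
      (lt_of_le_of_lt (natDegree_det_one_add_X_smul X₂) (by omega))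
  have hXpow : PowerSeries.coeff (k+3) (PowerSeries.X ^ (k+3) * (Q * W))
      = PowerSeries.coeff 0 (Q * W) := by
    have hp := PowerSeries.coeff_X_pow_mul (Q * W) (k+3) 0
    simpa using hp
  have hQW0 : PowerSeries.coeff 0 (Q * W) = ∑ i, v i * u i := by
    rw [PowerSeries.coeff_zero_eq_constantCoeff, _root_.map_mul, hQ0, hWc, mul_one]
  rw [hX2c, hXpow, hQW0, zero_add] at hcoeff
  have hWterm : ∀ j, PowerSeries.coeff j W = (-1 : ℂ)^j * trS X₁ j := by
    intro j
    rw [trS_eq, coeff_inv_PSdet_neg, ← mul_assoc, ← mul_pow]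
    simp [hW]
  rw [Finset.sum_congr rfl
    (fun j _ => by rw [← trLambda_eq Xm j, hWterm (k+3-j)])] at hcoeff
  rw [Finset.sum_range_succ, Finset.sum_range_succ', Finset.sum_range_succ'] at hcoeff
  -- clean up the boundary terms
  have e0 : k + 3 - (k+3) = 0 := by omega
  have e1 : k + 3 - 1 = k + 2 := by omega
  rw [e0, Nat.sub_zero, trS_zero, trLambda_zero, trLambda_one, htr] at hcoeff
  simp only [zero_add, zero_mul, pow_zero, one_mul, mul_one, add_zero] at hcoeff
  -- now transform the goal
  have egoal : k + 2 + 1 = k + 3 := by omega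
  rw [egoal]
  have hIcc : Finset.Icc 2 (k+2) = Finset.Ico 2 (k+3) := by
    exact (Finset.Ico_add_one_right_eq_Icc 2 (k+2)).symm
  rw [hIcc, Finset.sum_Ico_eq_sum_range]
  have ekk : k + 3 - 2 = k + 1 := by omega
  rw [ekk]
  have hbridge : ∀ i ∈ Finset.range (k+1),
      trLambda Xm (i+1+1) * ((-1:ℂ)^(k+3-(i+1+1)) * trS X₁ (k+3-(i+1+1)))
        = -((-1:ℂ)^(k+2-(2+i)) * trLambda Xm (2+i) * trS X₁ (k+3-(2+i))) := by
    intro i hi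
    rw [Finset.mem_range] at hi
    have h5 : k+3-(i+1+1) = (k-i)+1 := by omega
    have h6 : k+2-(2+i) = k-i := by omega
    have h7 : 2+i = i+1+1 := by omega
    have h8 : k+3-(2+i) = (k-i)+1 := by omega
    rw [h5, h8, h6, h7, pow_succ]
    ring
  rw [Finset.sum_congr rfl hbridge, Finset.sum_neg_distrib] at hcoeff
  have hsum_comm : ∑ i, u i * v i = ∑ i, v i * u i :=
    Finset.sum_congr rfl (fun i _ => mul_comm _ _)
  rw [hsum_comm]
  have hs2 : (-1:ℂ)^(k+3) = -(-1:ℂ)^(k+2) := by ring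
  rw [hs2] at hcoeff
  have hs1 : (-1:ℂ)^k = (-1:ℂ)^(k+2) := by ring
  rw [hs1] at hcoeff
  linear_combination hcoeff
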